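/- The enhanced power graph of the symmetric group Sₙ is perfect if and only if n ≤ 7. -/

import Mathlib

def powerGraph (G : Type*) [Group G] : SimpleGraph G where
  Adj x y := x ≠ y ∧ ((∃ n : ℤ, n ≠ 0 ∧ y = x ^ n) ∨ ∃ n : ℤ, n ≠ 0 ∧ x = y ^ n)
  symm := ⟨fun _ _ ⟨h, h2⟩ => ⟨h.symm, h2.symm⟩⟩
  loopless := ⟨fun _ ⟨h, _⟩ => h rfl⟩

def enhancedPowerGraph (G : Type*) [Group G] : SimpleGraph G where
  Adj x y := x ≠ y ∧ ∃ z : G, x ∈ Subgroup.zpowers z ∧ y ∈ Subgroup.zpowers z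
  symm := ⟨fun _ _ ⟨h, z, hx, hy⟩ => ⟨h.symm, z, hy, hx⟩⟩
  loopless := ⟨fun _ ⟨h, _⟩ => h rfl⟩


def SimpleGraph.IsPerfect {V : Type*} (G : SimpleGraph V) : Prop :=
  ∀ s : Set V, (G.induce s).chromaticNumber = ((G.induce s).cliqueNum : ℕ∞)

open Subgroup Equiv List


/-- In a finite group, if `u, v` are powers of `w` and the order of `u` divides that of `v`,
then `u` is a power of `v` (uniqueness of subgroups of a cyclic group). -/
lemma aux_mem_zpowers_of_dvd {G : Type*} [Group G] [Finite G] {w u v : G}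
    (hu : u ∈ zpowers w) (hv : v ∈ zpowers w) (h : orderOf u ∣ orderOf v) :
    u ∈ zpowers v := by
  have hw : IsOfFinOrder w := isOfFinOrder_of_finite w
  obtain ⟨m, hm⟩ := (Submonoid.mem_powers_iff _ _).mp (hw.mem_powers_iff_mem_zpowers.mpr hu)
  obtain ⟨k, hk⟩ := (Submonoid.mem_powers_iff _ _).mp (hw.mem_powers_iff_mem_zpowers.mpr hv)
  set N := orderOf w with hN
  have hNpos : 0 < N := hw.orderOf_pos
  have hu' : orderOf u = N / Nat.gcd N m := by rw [← hm, orderOf_pow]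
  have hv' : orderOf v = N / Nat.gcd N k := by rw [← hk, orderOf_pow]
  set g1 := Nat.gcd N m with hg1
  set g := Nat.gcd N k with hg
  have hg1N : g1 ∣ N := Nat.gcd_dvd_left N m
  have hgN : g ∣ N := Nat.gcd_dvd_left N k
  have hg1pos : 0 < g1 := Nat.gcd_pos_of_pos_left m hNpos
  have hgpos : 0 < g := Nat.gcd_pos_of_pos_left k hNpos
  have h1 : N / g1 ∣ N / g := by rw [← hu', ← hv']; exact h
  have hgg1 : g ∣ g1 := by
    obtain ⟨t, ht⟩ := h1
    have e1 : g1 * (N / g1) = N := Nat.mul_div_cancel' hg1N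
    have e2 : g * (N / g) = N := Nat.mul_div_cancel' hgN
    have hpos : 0 < N / g1 := Nat.div_pos (Nat.le_of_dvd hNpos hg1N) hg1pos
    have e3 : N = g * t * (N / g1) := by
      conv_lhs => rw [← e2, ht]
      ring
    have : g1 * (N / g1) = g * t * (N / g1) := by rw [e1, ← e3]
    exact ⟨t, Nat.eq_of_mul_eq_mul_right hpos this⟩
  have hgm : g ∣ m := hgg1.trans (Nat.gcd_dvd_right N m)
  have hwg : w ^ g ∈ zpowers v := by
    have hbez : (g : ℤ) = N * Nat.gcdA N k + k * Nat.gcdB N k := Nat.gcd_eq_gcd_ab N k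
    have : w ^ (g : ℤ) ∈ zpowers v := by
      rw [hbez, zpow_add, zpow_mul, zpow_mul]
      have e1 : w ^ (N : ℤ) = 1 := by
        rw [zpow_natCast, hN, pow_orderOf_eq_one]
      have e2 : w ^ (k : ℤ) = v := by rw [zpow_natCast, hk]
      rw [e1, e2, one_zpow, one_mul]
      exact zpow_mem (mem_zpowers v) _
    rwa [zpow_natCast] at this
  obtain ⟨s, hs⟩ := hgm
  rw [← hm, hs, pow_mul]
  exact pow_mem hwg s

/-- If `x` and `y` commute and have coprime orders, `x` is a power of `x * y`. -/
lemma aux_mem_zpowers_mul {G : Type*} [Group G] [Finite G] {x y : G}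
    (h : Commute x y) (hco : Nat.Coprime (orderOf x) (orderOf y)) :
    x ∈ zpowers (x * y) := by
  rcases eq_or_lt_of_le (show 1 ≤ orderOf x from orderOf_pos x) with h1 | h1
  · have : x = 1 := orderOf_eq_one_iff.mp h1.symm
    rw [this]; exact one_mem _
  · obtain ⟨c, -, hc⟩ := Nat.exists_mul_mod_eq_one_of_coprime hco.symm h1
    refine ⟨((orderOf y * c : ℕ) : ℤ), ?_⟩
    show (x * y) ^ ((orderOf y * c : ℕ) : ℤ) = x
    rw [zpow_natCast, h.mul_pow]
    have e1 : y ^ (orderOf y * c) = 1 := by rw [pow_mul, pow_orderOf_eq_one, one_pow]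
    have e2 : x ^ (orderOf y * c) = x := by
      rw [← pow_mod_orderOf, hc, pow_one]
    rw [e1, e2, mul_one]

/-- Rank function on element orders used to orient the enhanced power graph of `S₇`. -/
def epgRk : ℕ → ℕ
  | 1 => 0 | 2 => 1 | 4 => 2 | 7 => 3 | 10 => 4 | 5 => 5 | 12 => 6 | 6 => 7 | 3 => 8 | _ => 9

/-- The possible element orders in `S₇`: divisors of `12`, `10` or `7`. -/
def epgOrd (m : ℕ) : Prop := m ∣ 12 ∨ m ∣ 10 ∨ m ∣ 7

instance : DecidablePred epgOrd := fun _ => inferInstanceAs (Decidable (_ ∨ _ ∨ _))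

lemma epgOrd_dvd {a m : ℕ} (h : a ∣ m) (hm : epgOrd m) : epgOrd a := by
  rcases hm with h' | h' | h'
  exacts [Or.inl (h.trans h'), Or.inr (Or.inl (h.trans h')), Or.inr (Or.inr (h.trans h'))]

lemma epgOrd_mem {m : ℕ} (hm : epgOrd m) : m ∈ ([1,2,3,4,5,6,7,10,12] : List ℕ) := by
  have h12 : m ≤ 12 := by
    rcases hm with h | h | h
    exacts [Nat.le_of_dvd (by norm_num) h, (Nat.le_of_dvd (by norm_num) h).trans (by norm_num),
      (Nat.le_of_dvd (by norm_num) h).trans (by norm_num)]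
  interval_cases m <;> revert hm <;> decide

lemma epgAF : ∀ m1 ∈ ([1,2,3,4,5,6,7,10,12] : List ℕ), ∀ m2 ∈ ([1,2,3,4,5,6,7,10,12] : List ℕ),
    ∀ a ∈ ([1,2,3,4,5,6,7,10,12] : List ℕ), ∀ b ∈ ([1,2,3,4,5,6,7,10,12] : List ℕ),
    ∀ c ∈ ([1,2,3,4,5,6,7,10,12] : List ℕ),
    a ∣ m1 → b ∣ m1 → b ∣ m2 → c ∣ m2 →
    epgRk a < epgRk b → epgRk b < epgRk c →
    ((a = 1 ∨ b = m1 ∨ b = m2 ∨ a ∣ b ∨ c ∣ b) ∧ a ≠ c) := by decide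

lemma epgRk_inj : ∀ a ∈ ([1,2,3,4,5,6,7,10,12] : List ℕ), ∀ b ∈ ([1,2,3,4,5,6,7,10,12] : List ℕ),
    epgRk a = epgRk b → a = b := by decide

lemma epg_multiset_lemma (M : Multiset ℕ) (h2 : ∀ a ∈ M, 2 ≤ a) (hs : M.sum ≤ 7) :
    M.lcm ∣ 12 ∨ M.lcm ∣ 10 ∨ M.lcm ∣ 7 := by
  have hle : ∀ a ∈ M, a ≤ 7 := fun a ha =>
    le_trans (Multiset.single_le_sum (fun x _ => Nat.zero_le x) a ha) hs
  by_cases h7 : 7 ∈ M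
  · right; right
    obtain ⟨M', rfl⟩ := Multiset.exists_cons_of_mem h7
    have hM' : M' = 0 := by
      by_contra h
      obtain ⟨b, hb⟩ := Multiset.exists_mem_of_ne_zero h
      have hb2 : 2 ≤ b := h2 b (Multiset.mem_cons_of_mem hb)
      have : (7 : ℕ) + b ≤ (7 ::ₘ M').sum := by
        rw [Multiset.sum_cons]
        exact Nat.add_le_add_left (Multiset.single_le_sum (fun x _ => Nat.zero_le x) b hb) 7
      omega
    subst hM'
    apply Multiset.lcm_dvd.mpr
    intro a ha
    rcases Multiset.mem_cons.mp ha with rfl | ha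
    · exact dvd_refl 7
    · exact absurd ha (Multiset.notMem_zero a)
  · by_cases h5 : 5 ∈ M
    · right; left
      obtain ⟨M', rfl⟩ := Multiset.exists_cons_of_mem h5
      have hM' : ∀ b ∈ M', b = 2 := by
        intro b hb
        have hb2 : 2 ≤ b := h2 b (Multiset.mem_cons_of_mem hb)
        have : (5 : ℕ) + b ≤ (5 ::ₘ M').sum := by
          rw [Multiset.sum_cons]
          exact Nat.add_le_add_left (Multiset.single_le_sum (fun x _ => Nat.zero_le x) b hb) 5
        omega
      apply Multiset.lcm_dvd.mpr
      intro a ha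
      rcases Multiset.mem_cons.mp ha with rfl | ha
      · norm_num
      · rw [hM' a ha]; norm_num
    · left
      apply Multiset.lcm_dvd.mpr
      intro a ha
      have h1 : 2 ≤ a := h2 a ha
      have h3 : a ≤ 7 := hle a ha
      have h4 : a ≠ 7 := fun h => h7 (h ▸ ha)
      have h6 : a ≠ 5 := fun h => h5 (h ▸ ha)
      interval_cases a <;> first | exact absurd rfl h6 | exact absurd rfl h4 | norm_num

lemma orderOf_perm7 (σ : Equiv.Perm (Fin 7)) : epgOrd (orderOf σ) := by
  have h := Equiv.Perm.lcm_cycleType σ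
  have h2 := epg_multiset_lemma σ.cycleType
    (fun a ha => Equiv.Perm.two_le_of_mem_cycleType ha)
    (by rw [Equiv.Perm.sum_cycleType]
        exact le_trans (Finset.card_le_univ _) (by simp))
  rw [h] at h2
  exact h2

lemma orderOf_perm_le7 {n : ℕ} (hn : n ≤ 7) (σ : Equiv.Perm (Fin n)) :
    epgOrd (orderOf σ) := by
  have := orderOf_injective (Equiv.Perm.viaEmbeddingHom (Fin.castLEEmb hn))
    (Equiv.Perm.viaEmbeddingHom_injective (Fin.castLEEmb hn)) σ
  rw [← this]
  exact orderOf_perm7 _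

open SimpleGraph in
lemma comparability_chromaticNumber {V : Type*} [Finite V] (G : SimpleGraph V)
    (r : V → V → Prop) (hirr : ∀ x, ¬ r x x) (htr : ∀ {a b c}, r a b → r b c → r a c)
    (hadj : ∀ x y, G.Adj x y ↔ r x y ∨ r y x) :
    G.chromaticNumber = (G.cliqueNum : ℕ∞) := by
  classical
  rcases isEmpty_or_nonempty V with hemp | hne
  · rw [G.chromaticNumber_eq_zero_of_isEmpty]
    have hcl : G.cliqueNum = 0 := by
      have hset : {n | ∃ s, G.IsNClique n s} = {0} := by
        ext n
        simp only [Set.mem_setOf_eq, Set.mem_singleton_iff]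
        constructor
        · rintro ⟨s, hs⟩
          have hs0 : s = ∅ := Finset.eq_empty_of_isEmpty s
          rw [hs0] at hs
          simpa using hs.card_eq.symm
        · rintro rfl
          exact ⟨∅, by simp⟩
      rw [SimpleGraph.cliqueNum, hset, csSup_singleton]
    rw [hcl]
    rfl
  · cases nonempty_fintype V
    letI : IsTrans V r := ⟨fun a b c => htr⟩
    letI : IsIrrefl V r := ⟨hirr⟩
    have wf : WellFounded r := Finite.wellFounded_of_trans_of_irrefl r
    let h : V → ℕ := wf.fix (fun x ih =>
      ((Finset.univ.filter (fun y => r y x)).attach.sup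
        (fun y => ih y.1 (Finset.mem_filter.mp y.2).2 + 1)))
    have hfix : ∀ x, h x = ((Finset.univ.filter (fun y => r y x)).attach.sup
        (fun y => h y.1 + 1)) := by
      intro x
      show wf.fix _ x = _
      rw [WellFounded.fix_eq]
    have hlt : ∀ {y x}, r y x → h y < h x := by
      intro y x hyx
      rw [hfix x]
      have hy : y ∈ Finset.univ.filter (fun y => r y x) := by simp [hyx]
      calc h y < h y + 1 := Nat.lt_succ_self _
        _ ≤ _ := Finset.le_sup (f := fun z => h z.1 + 1) (Finset.mem_attach _ ⟨y, hy⟩)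
    have hchain : ∀ x, ∃ t : Finset V, G.IsNClique (h x + 1) t ∧ ∀ z ∈ t, z = x ∨ r z x := by
      intro x
      induction x using WellFounded.induction wf with
      | _ x IH =>
        rcases Nat.eq_zero_or_pos (h x) with h0 | h0
        · refine ⟨{x}, ?_, ?_⟩
          · rw [h0]
            constructor
            · simp [SimpleGraph.IsClique]
            · simp
          · intro z hz
            left
            simpa using hz
        · have hsne : ((Finset.univ.filter (fun y => r y x)).attach).Nonempty := by
            by_contra hby
            rw [Finset.not_nonempty_iff_eq_empty] at hby
            rw [hfix x, hby, Finset.sup_empty] at h0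
            exact Nat.lt_irrefl 0 h0
          obtain ⟨⟨y, hy⟩, -, hsup⟩ := Finset.exists_mem_eq_sup _ hsne (fun z => h z.1 + 1)
          have hryx : r y x := (Finset.mem_filter.mp hy).2
          obtain ⟨t, ht, htz⟩ := IH y hryx
          have hxt : x ∉ t := by
            intro hx
            rcases htz x hx with rfl | hr
            · exact hirr x hryx
            · exact hirr x (htr hr hryx)
          have hhx : h x = h y + 1 := by rw [hfix x, hsup]
          refine ⟨insert x t, ⟨?_, ?_⟩, ?_⟩
          · rw [Finset.coe_insert]
            apply ht.isClique.insert
            intro b hb hbx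
            rcases htz b (Finset.mem_coe.mp hb) with rfl | hr
            · exact (hadj x b).mpr (Or.inr hryx)
            · exact (hadj x b).mpr (Or.inr (htr hr hryx))
          · rw [Finset.card_insert_of_notMem hxt, ht.card_eq]
            omega
          · intro z hz
            rcases Finset.mem_insert.mp hz with rfl | hz
            · exact Or.inl rfl
            · rcases htz z hz with rfl | hr
              · exact Or.inr hryx
              · exact Or.inr (htr hr hryx)
    obtain ⟨x0, -, hx0⟩ := Finset.exists_mem_eq_sup Finset.univ Finset.univ_nonempty h
    set N := h x0 + 1 with hN
    have hcol : G.Colorable N := by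
      refine ⟨SimpleGraph.Coloring.mk (fun x => ⟨h x, ?_⟩) ?_⟩
      · have hx : h x ≤ Finset.univ.sup h := Finset.le_sup (Finset.mem_univ x)
        omega
      · intro a b hab
        rcases (hadj a b).mp hab with hr | hr
        · exact Fin.ne_of_val_ne (hlt hr).ne
        · exact Fin.ne_of_val_ne (hlt hr).ne'
    have h2 : N ≤ G.cliqueNum := by
      obtain ⟨t, ht, -⟩ := hchain x0
      have := SimpleGraph.IsClique.card_le_cliqueNum (tc := ht.isClique) (G := G)
      rwa [ht.card_eq] at this
    have hcbound : ∀ m : ℕ, G.Colorable m → G.cliqueNum ≤ m := by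
      rintro m ⟨C⟩
      obtain ⟨t, ht⟩ := G.exists_isNClique_cliqueNum
      rw [← ht.card_eq]
      have hcard : t.card ≤ (Finset.univ : Finset (Fin m)).card := by
        apply Finset.card_le_card_of_injOn C (fun a _ => Finset.mem_univ _)
        intro a ha b hb hcab
        by_contra hne
        exact C.valid (ht.isClique (Finset.mem_coe.mpr ha) (Finset.mem_coe.mpr hb) hne) hcab
      simpa using hcard
    have h3 : (G.cliqueNum : ℕ∞) ≤ G.chromaticNumber := by
      rw [SimpleGraph.chromaticNumber_eq_biInf]
      apply le_iInf₂
      intro m hm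
      exact_mod_cast hcbound m hm
    refine le_antisymm (le_trans hcol.chromaticNumber_le ?_) h3
    exact_mod_cast h2

/-- The strict order orienting the enhanced power graph of `Sₙ`, `n ≤ 7`. -/
def epgLT {n : ℕ} (x y : Equiv.Perm (Fin n)) : Prop :=
  (enhancedPowerGraph (Equiv.Perm (Fin n))).Adj x y ∧
    (epgRk (orderOf x) < epgRk (orderOf y) ∨
      (orderOf x = orderOf y ∧ WellOrderingRel x y))

lemma epgLT_irrefl {n : ℕ} (x : Equiv.Perm (Fin n)) : ¬ epgLT x x :=
  fun h => h.1.1 rfl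

lemma epgLT_trans {n : ℕ} (hn : n ≤ 7) {x y z : Equiv.Perm (Fin n)}
    (h1 : epgLT x y) (h2 : epgLT y z) : epgLT x z := by
  obtain ⟨⟨hxy, w1, hxw, hyw⟩, hr1⟩ := h1
  obtain ⟨⟨hyz, w2, hyw2, hzw2⟩, hr2⟩ := h2
  have hOx := epgOrd_mem (orderOf_perm_le7 hn x)
  have hOy := epgOrd_mem (orderOf_perm_le7 hn y)
  have hOz := epgOrd_mem (orderOf_perm_le7 hn z)
  rcases hr1 with hlt1 | ⟨heq1, hwr1⟩ <;> rcases hr2 with hlt2 | ⟨heq2, hwr2⟩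
  · -- strict, strict
    have hOw1 := epgOrd_mem (orderOf_perm_le7 hn w1)
    have hOw2 := epgOrd_mem (orderOf_perm_le7 hn w2)
    obtain ⟨hcase, hne⟩ := epgAF _ hOw1 _ hOw2 _ hOx _ hOy _ hOz
      (orderOf_dvd_of_mem_zpowers hxw) (orderOf_dvd_of_mem_zpowers hyw)
      (orderOf_dvd_of_mem_zpowers hyw2) (orderOf_dvd_of_mem_zpowers hzw2) hlt1 hlt2
    have hxz : x ≠ z := fun h => hne (by rw [h])
    refine ⟨⟨hxz, ?_⟩, Or.inl (hlt1.trans hlt2)⟩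
    rcases hcase with h1 | h1 | h1 | h1 | h1
    · exact ⟨z, by rw [orderOf_eq_one_iff.mp h1]; exact one_mem _, mem_zpowers z⟩
    · have hw1y : w1 ∈ zpowers y :=
        aux_mem_zpowers_of_dvd (mem_zpowers w1) hyw (by rw [h1])
      exact ⟨w2, (zpowers_le.mpr hyw2) ((zpowers_le.mpr hw1y) hxw), hzw2⟩
    · have hw2y : w2 ∈ zpowers y :=
        aux_mem_zpowers_of_dvd (mem_zpowers w2) hyw2 (by rw [h1])
      exact ⟨w1, hxw, (zpowers_le.mpr hyw) ((zpowers_le.mpr hw2y) hzw2)⟩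
    · exact ⟨w2, (zpowers_le.mpr hyw2) (aux_mem_zpowers_of_dvd hxw hyw h1), hzw2⟩
    · exact ⟨w1, hxw, (zpowers_le.mpr hyw) (aux_mem_zpowers_of_dvd hzw2 hyw2 h1)⟩
  · -- strict, tie
    have hzy : z ∈ zpowers y := aux_mem_zpowers_of_dvd hzw2 hyw2 (by rw [heq2])
    have hxz : x ≠ z := by
      intro h
      rw [h, heq2] at hlt1
      exact lt_irrefl _ hlt1
    exact ⟨⟨hxz, w1, hxw, (zpowers_le.mpr hyw) hzy⟩, Or.inl (heq2 ▸ hlt1)⟩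
  · -- tie, strict
    have hxy' : x ∈ zpowers y := aux_mem_zpowers_of_dvd hxw hyw (by rw [heq1])
    have hxz : x ≠ z := by
      intro h
      rw [← h, ← heq1] at hlt2
      exact lt_irrefl _ hlt2
    exact ⟨⟨hxz, w2, (zpowers_le.mpr hyw2) hxy', hzw2⟩, Or.inl (heq1 ▸ hlt2)⟩
  · -- tie, tie
    have hxy' : x ∈ zpowers y := aux_mem_zpowers_of_dvd hxw hyw (by rw [heq1])
    have hwr : WellOrderingRel x z := trans_of WellOrderingRel hwr1 hwr2
    have hxz : x ≠ z := by
      intro h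
      rw [h] at hwr
      exact irrefl_of WellOrderingRel z hwr
    exact ⟨⟨hxz, w2, (zpowers_le.mpr hyw2) hxy', hzw2⟩, Or.inr ⟨heq1.trans heq2, hwr⟩⟩

lemma epgLT_total {n : ℕ} (hn : n ≤ 7) {x y : Equiv.Perm (Fin n)}
    (h : (enhancedPowerGraph (Equiv.Perm (Fin n))).Adj x y) : epgLT x y ∨ epgLT y x := by
  rcases lt_trichotomy (epgRk (orderOf x)) (epgRk (orderOf y)) with hlt | heq | hgt
  · exact Or.inl ⟨h, Or.inl hlt⟩
  · have hord : orderOf x = orderOf y :=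
      epgRk_inj _ (epgOrd_mem (orderOf_perm_le7 hn x)) _ (epgOrd_mem (orderOf_perm_le7 hn y)) heq
    rcases trichotomous_of WellOrderingRel x y with hw | heqxy | hw
    · exact Or.inl ⟨h, Or.inr ⟨hord, hw⟩⟩
    · exact absurd heqxy h.ne
    · exact Or.inr ⟨h.symm, Or.inr ⟨hord.symm, hw⟩⟩
  · exact Or.inr ⟨h.symm, Or.inl hgt⟩

theorem epg_isPerfect {n : ℕ} (hn : n ≤ 7) :
    (enhancedPowerGraph (Equiv.Perm (Fin n))).IsPerfect := by
  intro s
  apply comparability_chromaticNumber _ (fun a b => epgLT a.1 b.1)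
  · exact fun x => epgLT_irrefl x.1
  · exact fun h1 h2 => epgLT_trans hn h1 h2
  · intro a b
    constructor
    · intro hab
      have : (enhancedPowerGraph (Equiv.Perm (Fin n))).Adj a.1 b.1 := hab
      exact epgLT_total hn this
    · rintro (h | h)
      · exact h.1
      · exact ((enhancedPowerGraph (Equiv.Perm (Fin n))).adj_symm h.1 : _)

/-- commuting elements of coprime orders are adjacent in the enhanced power graph -/
lemma epg_adj_of_commute_coprime {G : Type*} [Group G] [Finite G] {x y : G} (hne : x ≠ y)
    (h : Commute x y) (hco : Nat.Coprime (orderOf x) (orderOf y)) :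
    (enhancedPowerGraph G).Adj x y := by
  refine ⟨hne, x * y, aux_mem_zpowers_mul h hco, ?_⟩
  have := aux_mem_zpowers_mul h.symm hco.symm
  rwa [← h.eq] at this

/-- if `x,y` lie in a common cyclic subgroup they commute -/
lemma commute_of_epg_adj {G : Type*} [Group G] {x y : G}
    (h : (enhancedPowerGraph G).Adj x y) : Commute x y := by
  obtain ⟨-, w, hx, hy⟩ := h
  obtain ⟨i, rfl⟩ := hx
  obtain ⟨j, rfl⟩ := hy
  exact Commute.zpow_zpow (Commute.refl w) i j

/-- order of a cyclic permutation given by a nodup list -/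
lemma orderOf_formPerm {α : Type*} [Fintype α] [DecidableEq α] (l : List α)
    (h : l.Nodup) (hl : 2 ≤ l.length) : orderOf l.formPerm = l.length := by
  have hc := List.isCycle_formPerm h hl
  rw [hc.orderOf, List.support_formPerm_of_nodup l h
    (fun x hx => by rw [hx] at hl; simp at hl), List.card_toFinset, List.dedup_eq_self.mpr h]


/-- The 5-cycle graph on `Fin 5`. -/
def cycG : SimpleGraph (Fin 5) where
  Adj i j := i ≠ j ∧ (j = i + 1 ∨ i = j + 1)
  symm := ⟨fun _ _ ⟨h, h2⟩ => ⟨h.symm, h2.symm⟩⟩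
  loopless := ⟨fun _ ⟨h, _⟩ => h rfl⟩

instance : DecidableRel cycG.Adj := fun _ _ => instDecidableAnd

lemma cycG_no_triangle : ∀ t : Finset (Fin 5), ¬ cycG.IsNClique 3 t := by decide

lemma cycG_not_colorable : ¬ cycG.Colorable 2 := by
  rintro ⟨c⟩
  have h01 := c.valid (show cycG.Adj 0 1 by decide)
  have h12 := c.valid (show cycG.Adj 1 2 by decide)
  have h23 := c.valid (show cycG.Adj 2 3 by decide)
  have h34 := c.valid (show cycG.Adj 3 4 by decide)
  have h40 := c.valid (show cycG.Adj 4 0 by decide)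
  have key : ∀ a b c : Fin 2, a ≠ b → b ≠ c → a = c := by decide
  have e02 : c 0 = c 2 := key _ _ _ h01 h12
  have e24 : c 2 = c 4 := key _ _ _ h23 h34
  exact h40 (e02.trans e24).symm

section C5
variable {n : ℕ} (hn : 8 ≤ n)

set_option maxHeartbeats 1000000 in
theorem epg_not_perfect (hn : 8 ≤ n) :
    ¬ (enhancedPowerGraph (Equiv.Perm (Fin n))).IsPerfect := by
  -- the eight points
  have h0 : (0:ℕ) < n := by omega
  have h1 : (1:ℕ) < n := by omega
  have h2 : (2:ℕ) < n := by omega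
  have h3 : (3:ℕ) < n := by omega
  have h4 : (4:ℕ) < n := by omega
  have h5 : (5:ℕ) < n := by omega
  have h6 : (6:ℕ) < n := by omega
  have h7 : (7:ℕ) < n := by omega
  set p0 : Fin n := ⟨0, h0⟩
  set p1 : Fin n := ⟨1, h1⟩
  set p2 : Fin n := ⟨2, h2⟩
  set p3 : Fin n := ⟨3, h3⟩
  set p4 : Fin n := ⟨4, h4⟩
  set p5 : Fin n := ⟨5, h5⟩
  set p6 : Fin n := ⟨6, h6⟩
  set p7 : Fin n := ⟨7, h7⟩
  set l1 : List (Fin n) := [p0, p1] with hl1def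
  set l2 : List (Fin n) := [p2, p3, p7] with hl2def
  set l3 : List (Fin n) := [p5, p6] with hl3def
  set l4 : List (Fin n) := [p0, p1, p2, p3, p4] with hl4def
  set l5 : List (Fin n) := [p5, p6, p7] with hl5def
  have nd1 : l1.Nodup := by simp [hl1def, Fin.ext_iff, p0, p1, p2, p3, p4, p5, p6, p7]
  have nd2 : l2.Nodup := by simp [hl2def, Fin.ext_iff, p0, p1, p2, p3, p4, p5, p6, p7]
  have nd3 : l3.Nodup := by simp [hl3def, Fin.ext_iff, p0, p1, p2, p3, p4, p5, p6, p7]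
  have nd4 : l4.Nodup := by simp [hl4def, Fin.ext_iff, p0, p1, p2, p3, p4, p5, p6, p7]
  have nd5 : l5.Nodup := by simp [hl5def, Fin.ext_iff, p0, p1, p2, p3, p4, p5, p6, p7]
  set v1 := l1.formPerm with hv1def
  set v2 := l2.formPerm with hv2def
  set v3 := l3.formPerm with hv3def
  set v4 := l4.formPerm with hv4def
  set v5 := l5.formPerm with hv5def
  -- orders
  have o1 : orderOf v1 = 2 := orderOf_formPerm l1 nd1 (by simp [hl1def])
  have o2 : orderOf v2 = 3 := orderOf_formPerm l2 nd2 (by simp [hl2def])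
  have o3 : orderOf v3 = 2 := orderOf_formPerm l3 nd3 (by simp [hl3def])
  have o4 : orderOf v4 = 5 := orderOf_formPerm l4 nd4 (by simp [hl4def])
  have o5 : orderOf v5 = 3 := orderOf_formPerm l5 nd5 (by simp [hl5def])
  -- evaluations
  have e10 : v1 p0 = p1 := by
    rw [hv1def, hl1def, List.formPerm_pair]
    exact Equiv.swap_apply_left _ _
  have e11 : v1 p1 = p0 := by
    rw [hv1def, hl1def, List.formPerm_pair]
    exact Equiv.swap_apply_right _ _
  have e22 : v2 p2 = p3 := by
    have := List.formPerm_apply_getElem l2 nd2 0 (by simp [hl2def])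
    simpa [hl2def, v2, p0, p1, p2, p3, p4, p5, p6, p7] using this
  have e23 : v2 p3 = p7 := by
    have := List.formPerm_apply_getElem l2 nd2 1 (by simp [hl2def])
    simpa [hl2def, v2, p0, p1, p2, p3, p4, p5, p6, p7] using this
  have e20 : v2 p0 = p0 := by
    apply List.formPerm_apply_of_notMem
    simp [hl2def, Fin.ext_iff, p0, p1, p2, p3, p4, p5, p6, p7]
  have e35 : v3 p5 = p6 := by
    rw [hv3def, hl3def, List.formPerm_pair]
    exact Equiv.swap_apply_left _ _
  have e36 : v3 p6 = p5 := by
    rw [hv3def, hl3def, List.formPerm_pair]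
    exact Equiv.swap_apply_right _ _
  have e30 : v3 p0 = p0 := by
    apply List.formPerm_apply_of_notMem
    simp [hl3def, Fin.ext_iff, p0, p1, p2, p3, p4, p5, p6, p7]
  have e32 : v3 p2 = p2 := by
    apply List.formPerm_apply_of_notMem
    simp [hl3def, Fin.ext_iff, p0, p1, p2, p3, p4, p5, p6, p7]
  have e40 : v4 p0 = p1 := by
    have := List.formPerm_apply_getElem l4 nd4 0 (by simp [hl4def])
    simpa [hl4def, v4, p0, p1, p2, p3, p4, p5, p6, p7] using this
  have e41 : v4 p1 = p2 := by
    have := List.formPerm_apply_getElem l4 nd4 1 (by simp [hl4def])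
    simpa [hl4def, v4, p0, p1, p2, p3, p4, p5, p6, p7] using this
  have e42 : v4 p2 = p3 := by
    have := List.formPerm_apply_getElem l4 nd4 2 (by simp [hl4def])
    simpa [hl4def, v4, p0, p1, p2, p3, p4, p5, p6, p7] using this
  have e43 : v4 p3 = p4 := by
    have := List.formPerm_apply_getElem l4 nd4 3 (by simp [hl4def])
    simpa [hl4def, v4, p0, p1, p2, p3, p4, p5, p6, p7] using this
  have e55 : v5 p5 = p6 := by
    have := List.formPerm_apply_getElem l5 nd5 0 (by simp [hl5def])
    simpa [hl5def, v5, p0, p1, p2, p3, p4, p5, p6, p7] using this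
  have e56 : v5 p6 = p7 := by
    have := List.formPerm_apply_getElem l5 nd5 1 (by simp [hl5def])
    simpa [hl5def, v5, p0, p1, p2, p3, p4, p5, p6, p7] using this
  have e50 : v5 p0 = p0 := by
    apply List.formPerm_apply_of_notMem
    simp [hl5def, Fin.ext_iff, p0, p1, p2, p3, p4, p5, p6, p7]
  have e52 : v5 p2 = p2 := by
    apply List.formPerm_apply_of_notMem
    simp [hl5def, Fin.ext_iff, p0, p1, p2, p3, p4, p5, p6, p7]
  -- helper for distinctness
  have neqAt : ∀ {a b : Equiv.Perm (Fin n)} (t : Fin n), a t ≠ b t → a ≠ b := by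
    intro a b t h hab
    exact h (by rw [hab])
  have ne12 : v1 ≠ v2 := neqAt p0 (by rw [e10, e20]; simp [Fin.ext_iff, p0, p1, p2, p3, p4, p5, p6, p7])
  have ne13 : v1 ≠ v3 := neqAt p0 (by rw [e10, e30]; simp [Fin.ext_iff, p0, p1, p2, p3, p4, p5, p6, p7])
  have ne14 : v1 ≠ v4 := neqAt p1 (by rw [e11, e41]; simp [Fin.ext_iff, p0, p1, p2, p3, p4, p5, p6, p7])
  have ne15 : v1 ≠ v5 := neqAt p0 (by rw [e10, e50]; simp [Fin.ext_iff, p0, p1, p2, p3, p4, p5, p6, p7])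
  have ne23 : v2 ≠ v3 := neqAt p2 (by rw [e22, e32]; simp [Fin.ext_iff, p0, p1, p2, p3, p4, p5, p6, p7])
  have ne24 : v2 ≠ v4 := neqAt p0 (by rw [e20, e40]; simp [Fin.ext_iff, p0, p1, p2, p3, p4, p5, p6, p7])
  have ne25 : v2 ≠ v5 := neqAt p2 (by rw [e22, e52]; simp [Fin.ext_iff, p0, p1, p2, p3, p4, p5, p6, p7])
  have ne34 : v3 ≠ v4 := neqAt p0 (by rw [e30, e40]; simp [Fin.ext_iff, p0, p1, p2, p3, p4, p5, p6, p7])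
  have ne35 : v3 ≠ v5 := neqAt p6 (by rw [e36, e56]; simp [Fin.ext_iff, p0, p1, p2, p3, p4, p5, p6, p7])
  have ne45 : v4 ≠ v5 := neqAt p0 (by rw [e40, e50]; simp [Fin.ext_iff, p0, p1, p2, p3, p4, p5, p6, p7])
  -- commuting pairs (disjoint supports)
  have dis : ∀ (l l' : List (Fin n)), l.Nodup → l'.Nodup → 2 ≤ l.length → 2 ≤ l'.length →
      l.Disjoint l' → Commute l.formPerm l'.formPerm := by
    intro l l' h h' hl hl' hd
    exact ((List.formPerm_disjoint_iff h h' hl hl').mpr hd).commute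
  have c12 : Commute v1 v2 := by
    apply dis l1 l2 nd1 nd2 (by simp [hl1def]) (by simp [hl2def])
    intro a ha hb
    simp [hl1def, Fin.ext_iff, p0, p1, p2, p3, p4, p5, p6, p7] at ha
    simp [hl2def, Fin.ext_iff, p0, p1, p2, p3, p4, p5, p6, p7] at hb
    omega
  have c23 : Commute v2 v3 := by
    apply dis l2 l3 nd2 nd3 (by simp [hl2def]) (by simp [hl3def])
    intro a ha hb
    simp [hl2def, Fin.ext_iff, p0, p1, p2, p3, p4, p5, p6, p7] at ha
    simp [hl3def, Fin.ext_iff, p0, p1, p2, p3, p4, p5, p6, p7] at hb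
    omega
  have c34 : Commute v3 v4 := by
    apply dis l3 l4 nd3 nd4 (by simp [hl3def]) (by simp [hl4def])
    intro a ha hb
    simp [hl3def, Fin.ext_iff, p0, p1, p2, p3, p4, p5, p6, p7] at ha
    simp [hl4def, Fin.ext_iff, p0, p1, p2, p3, p4, p5, p6, p7] at hb
    omega
  have c45 : Commute v4 v5 := by
    apply dis l4 l5 nd4 nd5 (by simp [hl4def]) (by simp [hl5def])
    intro a ha hb
    simp [hl4def, Fin.ext_iff, p0, p1, p2, p3, p4, p5, p6, p7] at ha
    simp [hl5def, Fin.ext_iff, p0, p1, p2, p3, p4, p5, p6, p7] at hb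
    omega
  have c51 : Commute v5 v1 := by
    apply dis l5 l1 nd5 nd1 (by simp [hl5def]) (by simp [hl1def])
    intro a ha hb
    simp [hl5def, Fin.ext_iff, p0, p1, p2, p3, p4, p5, p6, p7] at ha
    simp [hl1def, Fin.ext_iff, p0, p1, p2, p3, p4, p5, p6, p7] at hb
    omega
  set G := enhancedPowerGraph (Equiv.Perm (Fin n)) with hGdef
  -- adjacencies
  have A12 : G.Adj v1 v2 := epg_adj_of_commute_coprime ne12 c12 (by rw [o1, o2]; norm_num)
  have A23 : G.Adj v2 v3 := epg_adj_of_commute_coprime ne23 c23 (by rw [o2, o3]; norm_num)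
  have A34 : G.Adj v3 v4 := epg_adj_of_commute_coprime ne34 c34 (by rw [o3, o4]; norm_num)
  have A45 : G.Adj v4 v5 := epg_adj_of_commute_coprime ne45 c45 (by rw [o4, o5]; norm_num)
  have A51 : G.Adj v5 v1 := epg_adj_of_commute_coprime ne15.symm c51 (by rw [o5, o1]; norm_num)
  -- non-adjacencies
  have N13 : ¬ G.Adj v1 v3 := by
    rintro ⟨-, w, hw1, hw3⟩
    have hmem : v1 ∈ Subgroup.zpowers v3 :=
      aux_mem_zpowers_of_dvd hw1 hw3 (by rw [o1, o3])
    obtain ⟨k, hk⟩ := hmem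
    have : v1 p0 = p0 := by
      rw [← hk]
      exact (v3).zpow_apply_eq_self_of_apply_eq_self e30 k
    rw [e10] at this
    simp [Fin.ext_iff, p0, p1, p2, p3, p4, p5, p6, p7] at this
  have N25 : ¬ G.Adj v2 v5 := by
    rintro ⟨-, w, hw2, hw5⟩
    have hmem : v2 ∈ Subgroup.zpowers v5 :=
      aux_mem_zpowers_of_dvd hw2 hw5 (by rw [o2, o5])
    obtain ⟨k, hk⟩ := hmem
    have : v2 p2 = p2 := by
      rw [← hk]
      exact (v5).zpow_apply_eq_self_of_apply_eq_self e52 k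
    rw [e22] at this
    simp [Fin.ext_iff, p0, p1, p2, p3, p4, p5, p6, p7] at this
  have N14 : ¬ G.Adj v1 v4 := by
    intro h
    have hc := commute_of_epg_adj h
    have : (v1 * v4) p0 = (v4 * v1) p0 := by rw [hc.eq]
    rw [Equiv.Perm.mul_apply, Equiv.Perm.mul_apply, e40, e11, e10, e41] at this
    simp [Fin.ext_iff, p0, p1, p2, p3, p4, p5, p6, p7] at this
  have N24 : ¬ G.Adj v2 v4 := by
    intro h
    have hc := commute_of_epg_adj h
    have : (v2 * v4) p2 = (v4 * v2) p2 := by rw [hc.eq]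
    rw [Equiv.Perm.mul_apply, Equiv.Perm.mul_apply, e42, e23, e22, e43] at this
    simp [Fin.ext_iff, p0, p1, p2, p3, p4, p5, p6, p7] at this
  have N35 : ¬ G.Adj v3 v5 := by
    intro h
    have hc := commute_of_epg_adj h
    have : (v3 * v5) p5 = (v5 * v3) p5 := by rw [hc.eq]
    rw [Equiv.Perm.mul_apply, Equiv.Perm.mul_apply, e55, e36, e35, e56] at this
    simp [Fin.ext_iff, p0, p1, p2, p3, p4, p5, p6, p7] at this
  clear_value v1 v2 v3 v4 v5
  -- the five-element vertex set
  intro hperf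
  set s : Set (Equiv.Perm (Fin n)) := {v1, v2, v3, v4, v5} with hsdef
  have hchrom := hperf s
  have m1 : v1 ∈ s := by simp [hsdef]
  have m2 : v2 ∈ s := by simp [hsdef]
  have m3 : v3 ∈ s := by simp [hsdef]
  have m4 : v4 ∈ s := by simp [hsdef]
  have m5 : v5 ∈ s := by simp [hsdef]
  set vv : Fin 5 → ↥s := ![⟨v1, m1⟩, ⟨v2, m2⟩, ⟨v3, m3⟩, ⟨v4, m4⟩, ⟨v5, m5⟩] with hvvdef
  have hbij : Function.Bijective vv := by
    constructor
    · intro i j hij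
      have hij' : (vv i).1 = (vv j).1 := by rw [hij]
      fin_cases i <;> fin_cases j <;>
        first
          | rfl
          | (exfalso
             simp only [hvvdef, Matrix.cons_val_zero, Matrix.cons_val_one, Matrix.head_cons,
               Matrix.cons_val_two, Matrix.tail_cons, Matrix.cons_val_three,
               Matrix.cons_val_four] at hij'
             first
               | exact ne12 hij' | exact ne13 hij' | exact ne14 hij' | exact ne15 hij'
               | exact ne23 hij' | exact ne24 hij' | exact ne25 hij'
               | exact ne34 hij' | exact ne35 hij' | exact ne45 hij'
               | exact ne12 hij'.symm | exact ne13 hij'.symm | exact ne14 hij'.symm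
               | exact ne15 hij'.symm | exact ne23 hij'.symm | exact ne24 hij'.symm
               | exact ne25 hij'.symm | exact ne34 hij'.symm | exact ne35 hij'.symm
               | exact ne45 hij'.symm)
    · rintro ⟨x, hx⟩
      rcases hx with rfl | rfl | rfl | rfl | rfl
      exacts [⟨0, rfl⟩, ⟨1, rfl⟩, ⟨2, rfl⟩, ⟨3, rfl⟩, ⟨4, rfl⟩]
  have iso : cycG ≃g (G.induce s) := by
    refine ⟨Equiv.ofBijective vv hbij, ?_⟩
    intro i j
    show (G.induce s).Adj (vv i) (vv j) ↔ cycG.Adj i j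
    fin_cases i <;> fin_cases j
    · exact iff_of_false ((G.induce s).irrefl) (by decide)
    · exact iff_of_true A12 (by decide)
    · exact iff_of_false N13 (by decide)
    · exact iff_of_false N14 (by decide)
    · exact iff_of_true A51.symm (by decide)
    · exact iff_of_true A12.symm (by decide)
    · exact iff_of_false ((G.induce s).irrefl) (by decide)
    · exact iff_of_true A23 (by decide)
    · exact iff_of_false N24 (by decide)
    · exact iff_of_false N25 (by decide)
    · exact iff_of_false (fun h => N13 h.symm) (by decide)
    · exact iff_of_true A23.symm (by decide)
    · exact iff_of_false ((G.induce s).irrefl) (by decide)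
    · exact iff_of_true A34 (by decide)
    · exact iff_of_false N35 (by decide)
    · exact iff_of_false (fun h => N14 h.symm) (by decide)
    · exact iff_of_false (fun h => N24 h.symm) (by decide)
    · exact iff_of_true A34.symm (by decide)
    · exact iff_of_false ((G.induce s).irrefl) (by decide)
    · exact iff_of_true A45 (by decide)
    · exact iff_of_true A51 (by decide)
    · exact iff_of_false (fun h => N25 h.symm) (by decide)
    · exact iff_of_false (fun h => N35 h.symm) (by decide)
    · exact iff_of_true A45.symm (by decide)
    · exact iff_of_false ((G.induce s).irrefl) (by decide)
  haveI : Fintype ↥s := Fintype.ofFinite ↥s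
  have hcl : (G.induce s).cliqueNum ≤ 2 := by
    by_contra hcl
    push_neg at hcl
    obtain ⟨t, ht⟩ := SimpleGraph.exists_isNClique_cliqueNum (G := G.induce s)
    have h3' : 3 ≤ t.card := by rw [ht.card_eq]; omega
    obtain ⟨u, hu, hucard⟩ := Finset.exists_subset_card_eq h3'
    have hu3 : (G.induce s).IsNClique 3 u := ⟨ht.isClique.subset (by exact_mod_cast hu), hucard⟩
    have hfin : cycG.IsNClique 3 (u.image iso.symm) := by
      constructor
      · rintro a ha b hb hne
        simp only [Finset.coe_image, Set.mem_image, Finset.mem_coe] at ha hb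
        obtain ⟨x, hx, rfl⟩ := ha
        obtain ⟨y, hy, rfl⟩ := hb
        have hxy : x ≠ y := fun h => hne (by rw [h])
        exact iso.symm.map_rel_iff.mpr
          (hu3.isClique (Finset.mem_coe.mpr hx) (Finset.mem_coe.mpr hy) hxy)
      · rw [Finset.card_image_of_injective _ iso.symm.injective, hucard]
    exact cycG_no_triangle _ hfin
  have hnc : ¬ (G.induce s).Colorable 2 := fun hc =>
    cycG_not_colorable (hc.of_hom iso.toEmbedding.toHom)
  have hle : (G.induce s).chromaticNumber ≤ ((2:ℕ) : ℕ∞) := by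
    rw [hchrom]
    exact_mod_cast hcl
  exact hnc (SimpleGraph.chromaticNumber_le_iff_colorable.mp hle)


end C5

/-- The enhanced power graph of the symmetric group `Sₙ` is perfect iff `n ≤ 7`. -/
theorem enhanced_symmetricGroup_isPerfect_iff (n : ℕ) :
    (enhancedPowerGraph (Equiv.Perm (Fin n))).IsPerfect ↔ n ≤ 7 := by
  constructor
  · intro h
    by_contra hn
    exact epg_not_perfect (by omega) h
  · exact fun hn => epg_isPerfect hn
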